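/- Let N ≥ 1, m ≥ 1, τ > 0, B ≥ 0. Let H : [0,∞) → ℝ^{N×m} be differentiable with row vectors h_i(t) satisfying ‖h_i(t)‖ ≤ B for all i and t (Euclidean norm), and suppose H satisfies the attention-based Graph ODE dH/dt = −(I − P(t))H(t), where P_{ij}(t) := exp(⟨h_i(t), h_j(t)⟩/τ) / Σ_{k=1}^N exp(⟨h_i(t), h_k(t)⟩/τ) and t ↦ P(t) is continuous. Then with α := (1/N) exp(−2B²/τ), for each feature dimension k one has diam(H_{·k}(t)) ≤ e^{−2αt} · diam(H_{·k}(0)) for all t ≥ 0, where diam(x) := max_i x_i − min_i x_i; in particular H(t) converges to the rank-one consensus subspace, i.e., ‖H(t) − 𝟏 y(t)ᵀ‖_F → 0 as t → ∞, where y(t) is the first row of H(t). -/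

import Mathlib

open Matrix BigOperators Filter Topology

attribute [local instance] Matrix.normedAddCommGroup Matrix.normedSpace

/-- The diameter of a vector: `diam x = max_i x_i − min_i x_i`. -/
noncomputable def vecDiam {N : ℕ} (x : Fin N → ℝ) : ℝ := (⨆ i, x i) - (⨅ i, x i)

/-- Frobenius norm of a real matrix. -/
noncomputable def frobNorm {N m : ℕ} (A : Matrix (Fin N) (Fin m) ℝ) : ℝ :=
  Real.sqrt (∑ i, ∑ k, (A i k) ^ 2)

open Set in
/-- Grönwall-type estimate for a finite supremum of differentiable functions,
where the derivative bound is only assumed at maximizers. -/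
lemma sup'_gronwall {ι : Type*} [Fintype ι] [Nonempty ι] (d d' : ι → ℝ → ℝ) (K : ℝ)
    (hd : ∀ q, ∀ t : ℝ, 0 ≤ t → HasDerivAt (d q) (d' q t) t)
    (hK : ∀ t : ℝ, 0 ≤ t → ∀ q,
      d q t = Finset.univ.sup' Finset.univ_nonempty (fun p => d p t) →
        d' q t ≤ K * Finset.univ.sup' Finset.univ_nonempty (fun p => d p t)) :
    ∀ t : ℝ, 0 ≤ t →
      Finset.univ.sup' Finset.univ_nonempty (fun p => d p t) ≤
        Real.exp (K * t) * Finset.univ.sup' Finset.univ_nonempty (fun p => d p 0) := by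
  set f : ℝ → ℝ := fun t => Finset.univ.sup' Finset.univ_nonempty (fun p => d p t) with hf_def
  intro b hb
  have hcont : ContinuousOn f (Icc 0 b) := by
    intro x hx
    have : ∀ q ∈ (Finset.univ : Finset ι),
        Tendsto (fun t => d q t) (𝓝[Icc 0 b] x) (𝓝 (d q x)) := fun q _ =>
      ((hd q x hx.1).continuousAt.continuousWithinAt)
    exact Tendsto.finset_sup'_nhds_apply Finset.univ_nonempty this
  have hslope : ∀ x ∈ Ico 0 b, ∀ r, K * f x < r →
      ∃ᶠ z in 𝓝[>] x, (z - x)⁻¹ * (f z - f x) < r := by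
    intro x hx r hr
    have hx0 : 0 ≤ x := hx.1
    have hev : ∀ᶠ z in 𝓝[>] x, ∀ q, d q z - f x < r * (z - x) := by
      rw [eventually_all]
      intro q
      by_cases hq : d q x = f x
      · have hder := hd q x hx0
        have hslope : Tendsto (slope (d q) x) (𝓝[>] x) (𝓝 (d' q x)) :=
          (hasDerivAt_iff_tendsto_slope.1 hder).mono_left
            (nhdsWithin_mono x (fun z hz => ne_of_gt hz))
        have hlt : d' q x < r := lt_of_le_of_lt (hK x hx0 q hq) hr
        filter_upwards [hslope.eventually_lt_const hlt, self_mem_nhdsWithin] with z hz hz'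
        have hzx : 0 < z - x := sub_pos.2 hz'
        have : (d q z - d q x) / (z - x) < r := by
          simpa [slope_def_field, div_eq_iff, sub_ne_zero] using hz
        rw [div_lt_iff₀ hzx] at this
        linarith [this, hq.ge]
      · have hle : d q x ≤ f x := Finset.le_sup' (fun p => d p x) (Finset.mem_univ q)
        have hlt : d q x < f x := lt_of_le_of_ne hle hq
        have h1 : Tendsto (fun z => d q z - f x) (𝓝[>] x) (𝓝 (d q x - f x)) :=
          (((hd q x hx0).continuousAt.tendsto).mono_left nhdsWithin_le_nhds).sub_const _
        have h2 : Tendsto (fun z => r * (z - x)) (𝓝[>] x) (𝓝 0) := by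
          have : Tendsto (fun z : ℝ => r * (z - x)) (𝓝 x) (𝓝 (r * (x - x))) :=
            (continuous_const.mul (continuous_id.sub continuous_const)).tendsto x
          simpa using this.mono_left nhdsWithin_le_nhds
        exact h1.eventually_lt h2 (by linarith)
    refine ((hev.and self_mem_nhdsWithin).mono ?_).frequently
    rintro z ⟨hz, hz'⟩
    have hzx : 0 < z - x := sub_pos.2 hz'
    have hfz : f z - f x < r * (z - x) := by
      have : f z < f x + r * (z - x) := by
        rw [hf_def]
        rw [Finset.sup'_lt_iff]
        intro q _
        linarith [hz q]
      linarith
    calc (z - x)⁻¹ * (f z - f x) < (z - x)⁻¹ * (r * (z - x)) := by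
          exact mul_lt_mul_of_pos_left hfz (inv_pos.2 hzx)
      _ = r := by field_simp
  have := le_gronwallBound_of_liminf_deriv_right_le (f' := fun x => K * f x)
    (δ := f 0) (K := K) (ε := 0) hcont hslope le_rfl
    (fun x _ => by simp) b ⟨hb, le_rfl⟩
  rw [sub_zero, gronwallBound_ε0, mul_comm] at this
  exact this

lemma vecDiam_eq_sup' {N : ℕ} [Nonempty (Fin N)] (x : Fin N → ℝ) :
    vecDiam x = Finset.univ.sup' Finset.univ_nonempty
      (fun p : Fin N × Fin N => x p.1 - x p.2) := by
  have hba : BddAbove (Set.range x) := (Set.finite_range x).bddAbove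
  have hbb : BddBelow (Set.range x) := (Set.finite_range x).bddBelow
  obtain ⟨i₀, hi₀⟩ := Finite.exists_max x
  obtain ⟨j₀, hj₀⟩ := Finite.exists_min x
  have hsup : (⨆ i, x i) = x i₀ := le_antisymm (ciSup_le hi₀) (le_ciSup hba i₀)
  have hinf : (⨅ i, x i) = x j₀ := le_antisymm (ciInf_le hbb j₀) (le_ciInf hj₀)
  apply le_antisymm
  · rw [vecDiam, hsup, hinf]
    exact Finset.le_sup' (fun p : Fin N × Fin N => x p.1 - x p.2)
      (Finset.mem_univ (i₀, j₀))
  · apply Finset.sup'_le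
    intro p _
    rw [vecDiam, hsup, hinf]
    exact sub_le_sub (hi₀ p.1) (hj₀ p.2)

lemma vecDiam_nonneg {N : ℕ} [Nonempty (Fin N)] (x : Fin N → ℝ) : 0 ≤ vecDiam x := by
  rw [vecDiam_eq_sup' x]
  obtain ⟨i⟩ := ‹Nonempty (Fin N)›
  have := Finset.le_sup' (fun p : Fin N × Fin N => x p.1 - x p.2) (Finset.mem_univ (i, i))
  exact le_trans (le_of_eq (sub_self (x i)).symm) this

lemma entry_le_vecDiam {N : ℕ} [Nonempty (Fin N)] (x : Fin N → ℝ) (i j : Fin N) :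
    x i - x j ≤ vecDiam x := by
  rw [vecDiam_eq_sup' x]
  exact Finset.le_sup' (fun p : Fin N × Fin N => x p.1 - x p.2) (Finset.mem_univ (i, j))

/-- **Dense soft attention induces the consensus trap.**
If the rows `h_i(t)` of `H(t)` satisfy `‖h_i(t)‖ ≤ B` and `H` solves the
attention-based Graph ODE `dH/dt = −(I − P(t))H` with
`P_{ij}(t) = exp(⟨h_i,h_j⟩/τ)/∑_k exp(⟨h_i,h_k⟩/τ)`, then with
`α = (1/N) exp(−2B²/τ)` every column diameter decays as `e^{−2αt}` and
`‖H(t) − 𝟏 y(t)ᵀ‖_F → 0`, where `y(t)` is the first row of `H(t)`. -/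
theorem dense_soft_attention_consensus_trap
    (N m : ℕ) (hN : 1 ≤ N) (hm : 1 ≤ m) (τ B : ℝ) (hτ : 0 < τ) (hB : 0 ≤ B)
    (H : ℝ → Matrix (Fin N) (Fin m) ℝ)
    (hbound : ∀ t ≥ (0:ℝ), ∀ i, Real.sqrt (∑ k, (H t i k) ^ 2) ≤ B)
    (P : ℝ → Matrix (Fin N) (Fin N) ℝ)
    (hP : ∀ t ≥ (0:ℝ), ∀ i j, P t i j =
      Real.exp ((∑ k, H t i k * H t j k) / τ) /
        ∑ l, Real.exp ((∑ k, H t i k * H t l k) / τ))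
    (hPcont : Continuous P)
    (hode : ∀ t ≥ (0:ℝ), HasDerivAt H ((P t) * (H t) - H t) t) :
    (∀ k : Fin m, ∀ t ≥ (0:ℝ),
        vecDiam (fun i => H t i k) ≤
          Real.exp (-2 * ((1 / (N : ℝ)) * Real.exp (-2 * B ^ 2 / τ)) * t) *
            vecDiam (fun i => H 0 i k)) ∧
      Tendsto
        (fun t : ℝ => frobNorm (H t - Matrix.of fun (_ : Fin N) (k : Fin m) => H t ⟨0, hN⟩ k))
        atTop (𝓝 0) := by
  haveI : Nonempty (Fin N) := ⟨⟨0, hN⟩⟩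
  set α : ℝ := (1 / (N : ℝ)) * Real.exp (-2 * B ^ 2 / τ) with hα_def
  have hNpos : (0:ℝ) < N := by exact_mod_cast Nat.pos_of_ne_zero (by omega)
  have hα_pos : 0 < α := by
    apply mul_pos _ (Real.exp_pos _)
    positivity
  -- inner products are bounded by B^2
  have hip : ∀ t ≥ (0:ℝ), ∀ i j, |∑ k, H t i k * H t j k| ≤ B ^ 2 := by
    intro t ht i j
    have hcs := Finset.sum_mul_sq_le_sq_mul_sq Finset.univ (fun k => H t i k) (fun k => H t j k)
    have hi2 : ∑ k, (H t i k) ^ 2 ≤ B ^ 2 := by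
      have h1 := hbound t ht i
      have h2 : (0:ℝ) ≤ ∑ k, (H t i k) ^ 2 := by positivity
      nlinarith [Real.sq_sqrt h2, Real.sqrt_nonneg (∑ k, (H t i k) ^ 2)]
    have hj2 : ∑ k, (H t j k) ^ 2 ≤ B ^ 2 := by
      have h1 := hbound t ht j
      have h2 : (0:ℝ) ≤ ∑ k, (H t j k) ^ 2 := by positivity
      nlinarith [Real.sq_sqrt h2, Real.sqrt_nonneg (∑ k, (H t j k) ^ 2)]
    have hsq : (∑ k, H t i k * H t j k) ^ 2 ≤ (B ^ 2) ^ 2 := by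
      have h2 : (0:ℝ) ≤ ∑ k, (H t i k) ^ 2 := by positivity
      have h3 : (0:ℝ) ≤ ∑ k, (H t j k) ^ 2 := by positivity
      nlinarith
    exact abs_le.2 (abs_le_of_sq_le_sq' hsq (by positivity))
  have hDpos : ∀ t i, (0:ℝ) < ∑ l, Real.exp ((∑ k, H t i k * H t l k) / τ) :=
    fun t i => Finset.sum_pos (fun l _ => Real.exp_pos _) Finset.univ_nonempty
  -- each entry of P is at least α
  have hPge : ∀ t ≥ (0:ℝ), ∀ i j, α ≤ P t i j := by
    intro t ht i j
    rw [hP t ht i j]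
    have hnum : Real.exp (-(B ^ 2) / τ) ≤ Real.exp ((∑ k, H t i k * H t j k) / τ) := by
      apply Real.exp_le_exp.2
      gcongr
      exact (abs_le.1 (hip t ht i j)).1
    have hden : ∑ l, Real.exp ((∑ k, H t i k * H t l k) / τ) ≤
        (N : ℝ) * Real.exp (B ^ 2 / τ) := by
      calc ∑ l, Real.exp ((∑ k, H t i k * H t l k) / τ)
          ≤ ∑ _l : Fin N, Real.exp (B ^ 2 / τ) := by
            apply Finset.sum_le_sum
            intro l _
            apply Real.exp_le_exp.2
            gcongr
            exact (abs_le.1 (hip t ht i l)).2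
        _ = (N : ℝ) * Real.exp (B ^ 2 / τ) := by
            rw [Finset.sum_const, Finset.card_univ, Fintype.card_fin, nsmul_eq_mul]
    have hαeq : α = Real.exp (-(B ^ 2) / τ) / ((N : ℝ) * Real.exp (B ^ 2 / τ)) := by
      have hexp : Real.exp (-2 * B ^ 2 / τ) =
          Real.exp (-(B ^ 2) / τ) / Real.exp (B ^ 2 / τ) := by
        rw [← Real.exp_sub]; congr 1; ring
      rw [hα_def, hexp]
      field_simp
    rw [hαeq]
    exact div_le_div₀ (Real.exp_pos _).le hnum (hDpos t i)  hden
  -- rows of P sum to 1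
  have hProw : ∀ t ≥ (0:ℝ), ∀ i, ∑ l, P t i l = 1 := by
    intro t ht i
    have h1 : ∑ l, P t i l = ∑ l, Real.exp ((∑ k, H t i k * H t l k) / τ) /
        (∑ l', Real.exp ((∑ k, H t i k * H t l' k) / τ)) :=
      Finset.sum_congr rfl (fun l _ => hP t ht i l)
    rw [h1, ← Finset.sum_div, div_self (hDpos t i).ne']
  -- entrywise derivatives
  have hderiv : ∀ (i : Fin N) (k : Fin m) (t : ℝ), 0 ≤ t →
      HasDerivAt (fun s => H s i k) ((P t * H t) i k - H t i k) t := by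
    intro i k t ht
    have hL := ((Matrix.entryLinearMap ℝ ℝ i k).toContinuousLinearMap.hasFDerivAt
      (x := H t)).comp_hasDerivAt t (hode t ht)
    have hL' : HasDerivAt (fun s => H s i k) ((P t * H t - H t) i k) t := hL
    simpa [Matrix.sub_apply] using hL'
  -- Part 1
  have hpart1 : ∀ k : Fin m, ∀ t ≥ (0:ℝ), vecDiam (fun i => H t i k) ≤
      Real.exp (-2 * α * t) * vecDiam (fun i => H 0 i k) := by
    intro k
    set d : Fin N × Fin N → ℝ → ℝ := fun p t => H t p.1 k - H t p.2 k with hd_def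
    set d' : Fin N × Fin N → ℝ → ℝ := fun p t =>
      ((P t * H t) p.1 k - H t p.1 k) - ((P t * H t) p.2 k - H t p.2 k) with hd'_def
    have hd : ∀ q (t : ℝ), 0 ≤ t → HasDerivAt (d q) (d' q t) t :=
      fun q t ht => (hderiv q.1 k t ht).sub (hderiv q.2 k t ht)
    have hK : ∀ (t : ℝ), 0 ≤ t → ∀ q,
        d q t = Finset.univ.sup' Finset.univ_nonempty (fun p => d p t) →
          d' q t ≤ (-2 * α) * Finset.univ.sup' Finset.univ_nonempty (fun p => d p t) := by
      intro t ht q hq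
      set S := Finset.univ.sup' Finset.univ_nonempty (fun p => d p t) with hS_def
      have hpair : ∀ l l' : Fin N, H t l k - H t l' k ≤ S := fun l l' =>
        Finset.le_sup' (fun p => d p t) (Finset.mem_univ (l, l'))
      have hS0 : 0 ≤ S := by have := hpair q.1 q.1; simpa using this
      have hβ0 : (0:ℝ) ≤ 1 - N * α := by
        have hsum := hProw t ht q.1
        have : ∑ l, (P t q.1 l - α) = 1 - N * α := by
          rw [Finset.sum_sub_distrib, hsum, Finset.sum_const, Finset.card_univ,
            Fintype.card_fin, nsmul_eq_mul]
        rw [← this]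
        exact Finset.sum_nonneg (fun l _ => sub_nonneg.2 (hPge t ht q.1 l))
      have hkey : ∀ i j : Fin N,
          (P t * H t) i k - (P t * H t) j k ≤ (1 - N * α) * S := by
        intro i j
        set c : Fin N → ℝ := fun l => P t i l - α with hc_def
        set c' : Fin N → ℝ := fun l => P t j l - α with hc'_def
        have hc : ∀ l, 0 ≤ c l := fun l => sub_nonneg.2 (hPge t ht i l)
        have hc' : ∀ l, 0 ≤ c' l := fun l => sub_nonneg.2 (hPge t ht j l)
        have hsumc : ∑ l, c l = 1 - N * α := by
          simp only [hc_def]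
          rw [Finset.sum_sub_distrib, hProw t ht i, Finset.sum_const, Finset.card_univ,
            Fintype.card_fin, nsmul_eq_mul]
        have hsumc' : ∑ l, c' l = 1 - N * α := by
          simp only [hc'_def]
          rw [Finset.sum_sub_distrib, hProw t ht j, Finset.sum_const, Finset.card_univ,
            Fintype.card_fin, nsmul_eq_mul]
        have expand : (P t * H t) i k - (P t * H t) j k =
            (∑ l, c l * H t l k) - (∑ l, c' l * H t l k) := by
          rw [Matrix.mul_apply, Matrix.mul_apply]
          simp only [hc_def, hc'_def, sub_mul, Finset.sum_sub_distrib]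
          ring
        rw [expand]
        rcases eq_or_lt_of_le hβ0 with h0 | hpos
        · have hz : ∀ l ∈ (Finset.univ : Finset (Fin N)), c l = 0 :=
            (Finset.sum_eq_zero_iff_of_nonneg (fun l _ => hc l)).1 (by rw [hsumc, ← h0])
          have hz' : ∀ l ∈ (Finset.univ : Finset (Fin N)), c' l = 0 :=
            (Finset.sum_eq_zero_iff_of_nonneg (fun l _ => hc' l)).1 (by rw [hsumc', ← h0])
          rw [Finset.sum_eq_zero (fun l hl => by rw [hz l hl, zero_mul]),
            Finset.sum_eq_zero (fun l hl => by rw [hz' l hl, zero_mul]), ← h0]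
          simp
        · have e1 : ∑ l, ∑ l', c l * c' l' * (H t l k - H t l' k) =
              (∑ l, c l * H t l k) * (∑ l', c' l') -
                (∑ l, c l) * (∑ l', c' l' * H t l' k) := by
            rw [Finset.sum_mul_sum, Finset.sum_mul_sum, ← Finset.sum_sub_distrib]
            refine Finset.sum_congr rfl fun l _ => ?_
            rw [← Finset.sum_sub_distrib]
            exact Finset.sum_congr rfl fun l' _ => by ring
          have hdouble : (1 - N * α) * ((∑ l, c l * H t l k) - (∑ l, c' l * H t l k)) =
              ∑ l, ∑ l', c l * c' l' * (H t l k - H t l' k) := by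
            rw [e1, hsumc, hsumc']
            ring
          have hbound' : ∑ l, ∑ l', c l * c' l' * (H t l k - H t l' k) ≤
              ∑ l, ∑ l', c l * c' l' * S := by
            refine Finset.sum_le_sum fun l _ => Finset.sum_le_sum fun l' _ => ?_
            exact mul_le_mul_of_nonneg_left (hpair l l') (mul_nonneg (hc l) (hc' l'))
          have hsum2 : ∑ l, ∑ l', c l * c' l' * S = (1 - N * α) * ((1 - N * α) * S) := by
            have hinner : ∀ l, ∑ l', c l * c' l' * S = c l * ((1 - N * α) * S) := by
              intro l
              rw [← Finset.sum_mul, ← Finset.mul_sum, hsumc']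
              ring
            rw [Finset.sum_congr rfl (fun l _ => hinner l), ← Finset.sum_mul, hsumc]
          have := (hdouble ▸ (hbound'.trans_eq hsum2) :
            (1 - N * α) * ((∑ l, c l * H t l k) - (∑ l, c' l * H t l k)) ≤
              (1 - N * α) * ((1 - N * α) * S))
          exact le_of_mul_le_mul_left this hpos
      have h2 : H t q.1 k - H t q.2 k = S := hq
      have h3 : d' q t = ((P t * H t) q.1 k - (P t * H t) q.2 k) -
          (H t q.1 k - H t q.2 k) := by
        simp only [hd'_def]; ring
      by_cases hN2 : 2 ≤ N
      · have hcast : (2:ℝ) ≤ N := by exact_mod_cast hN2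
        have hk := hkey q.1 q.2
        rw [h3, h2]
        nlinarith [hα_pos, hS0, mul_nonneg (mul_nonneg (sub_nonneg.2 hcast) hα_pos.le) hS0]
      · have hN1 : N = 1 := by omega
        have hq12 : q.1 = q.2 := by
          have h1' := q.1.isLt
          have h2' := q.2.isLt
          exact Fin.ext (by omega)
        have hS : S = 0 := by rw [← h2, hq12]; ring
        rw [h3, hq12, hS]
        simp
    intro t ht
    have hg := sup'_gronwall d d' (-2 * α) hd hK t ht
    rw [vecDiam_eq_sup', vecDiam_eq_sup']
    simpa [hd_def] using hg
  refine ⟨hpart1, ?_⟩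
  set i0 : Fin N := ⟨0, hN⟩ with hi0_def
  set C := Real.sqrt (∑ _i : Fin N, ∑ k : Fin m, (vecDiam (fun i' => H 0 i' k)) ^ 2)
    with hC_def
  have hub : ∀ t ≥ (0:ℝ), frobNorm (H t - Matrix.of fun _ k => H t i0 k) ≤
      Real.exp (-2 * α * t) * C := by
    intro t ht
    have hentry : ∀ (i : Fin N) (k : Fin m),
        (((H t - Matrix.of fun _ k => H t i0 k) : Matrix (Fin N) (Fin m) ℝ) i k) ^ 2 ≤
          (Real.exp (-2 * α * t) * vecDiam (fun i' => H 0 i' k)) ^ 2 := by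
      intro i k
      have h1 : ((H t - Matrix.of fun _ k => H t i0 k) : Matrix (Fin N) (Fin m) ℝ) i k = H t i k - H t i0 k := by
        simp [Matrix.sub_apply]
      rw [h1]
      have hd1 : H t i k - H t i0 k ≤ vecDiam (fun i' => H t i' k) :=
        entry_le_vecDiam (fun i' => H t i' k) i i0
      have hd2 : H t i0 k - H t i k ≤ vecDiam (fun i' => H t i' k) :=
        entry_le_vecDiam (fun i' => H t i' k) i0 i
      have hd3 := hpart1 k t ht
      apply sq_le_sq' <;> linarith
    calc frobNorm (H t - Matrix.of fun _ k => H t i0 k)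
        = Real.sqrt (∑ i, ∑ k, (((H t - Matrix.of fun _ k => H t i0 k) : Matrix (Fin N) (Fin m) ℝ) i k) ^ 2) := rfl
      _ ≤ Real.sqrt (∑ _i : Fin N, ∑ k : Fin m,
          (Real.exp (-2 * α * t) * vecDiam (fun i' => H 0 i' k)) ^ 2) := by
          apply Real.sqrt_le_sqrt
          exact Finset.sum_le_sum fun i _ => Finset.sum_le_sum fun k _ => hentry i k
      _ = Real.exp (-2 * α * t) * C := by
          rw [hC_def]
          have hmul : ∑ _i : Fin N, ∑ k : Fin m,
              (Real.exp (-2 * α * t) * vecDiam (fun i' => H 0 i' k)) ^ 2 =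
                (Real.exp (-2 * α * t)) ^ 2 *
                  ∑ _i : Fin N, ∑ k : Fin m, (vecDiam (fun i' => H 0 i' k)) ^ 2 := by
            simp_rw [mul_pow, ← Finset.mul_sum]
          rw [hmul, Real.sqrt_mul (sq_nonneg _), Real.sqrt_sq (Real.exp_nonneg _)]
  have htend : Tendsto (fun t => Real.exp (-2 * α * t) * C) atTop (𝓝 0) := by
    have h1 : Tendsto (fun t : ℝ => -2 * α * t) atTop atBot :=
      (tendsto_const_mul_atBot_of_neg (by linarith : -2 * α < 0)).2 tendsto_id
    have h2 : Tendsto (fun t : ℝ => Real.exp (-2 * α * t)) atTop (𝓝 0) :=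
      Real.tendsto_exp_atBot.comp h1
    simpa using h2.mul_const C
  apply tendsto_of_tendsto_of_tendsto_of_le_of_le' tendsto_const_nhds htend
  · filter_upwards with t
    exact Real.sqrt_nonneg _
  · filter_upwards [eventually_ge_atTop (0:ℝ)] with t ht
    exact hub t ht
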